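/- arXiv:1612.00698 — 2 statements merged into one kernel-verified Lean document; each statement's English description precedes it below -/
import Mathlib

section
/- Let G be a connected compact Lie group and Υ ∈ Lie(G). Then the stabilizer S(Υ) = {x ∈ G : Ad(x)(Υ) = Υ} contains a maximal torus of G. -/
open NormedSpace

section aux
variable {n : ℕ}

lemma myexp_continuous (Υ : Matrix (Fin n) (Fin n) ℝ) :
    Continuous fun t : ℝ => exp (t • Υ) := by
  letI : SeminormedRing (Matrix (Fin n) (Fin n) ℝ) := Matrix.linftyOpSemiNormedRing
  letI : NormedRing (Matrix (Fin n) (Fin n) ℝ) := Matrix.linftyOpNormedRing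
  letI : NormedAlgebra ℝ (Matrix (Fin n) (Fin n) ℝ) := Matrix.linftyOpNormedAlgebra
  letI : NormedAlgebra ℚ (Matrix (Fin n) (Fin n) ℝ) := NormedAlgebra.restrictScalars ℚ ℝ _
  exact exp_continuous.comp (continuous_id.smul continuous_const)

lemma myexp_comm (Υ x : Matrix (Fin n) (Fin n) ℝ)
    (h : ∀ t : ℝ, x * exp (t • Υ) = exp (t • Υ) * x) : x * Υ = Υ * x := by
  letI : SeminormedRing (Matrix (Fin n) (Fin n) ℝ) := Matrix.linftyOpSemiNormedRing
  letI : NormedRing (Matrix (Fin n) (Fin n) ℝ) := Matrix.linftyOpNormedRing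
  letI : NormedAlgebra ℝ (Matrix (Fin n) (Fin n) ℝ) := Matrix.linftyOpNormedAlgebra
  have d1 : HasDerivAt (fun t : ℝ => x * exp (t • Υ)) (x * (exp ((0:ℝ) • Υ) * Υ)) 0 :=
    (hasDerivAt_exp_smul_const Υ (0:ℝ)).const_mul x
  have d2 : HasDerivAt (fun t : ℝ => exp (t • Υ) * x) (exp ((0:ℝ) • Υ) * Υ * x) 0 :=
    (hasDerivAt_exp_smul_const Υ (0:ℝ)).mul_const x
  have hfg : (fun t : ℝ => x * exp (t • Υ)) = fun t : ℝ => exp (t • Υ) * x :=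
    funext h
  rw [hfg] at d1
  have := d1.unique d2
  simpa [zero_smul, exp_zero] using this

lemma myexp_mul (Υ : Matrix (Fin n) (Fin n) ℝ) (s t : ℝ) :
    exp ((s + t) • Υ) = exp (s • Υ) * exp (t • Υ) := by
  rw [add_smul]
  exact Matrix.exp_add_of_commute _ _ (((Commute.refl Υ).smul_left s).smul_right t)

/-- a helper: commutativity passes to topological closure -/
lemma comm_topologicalClosure {Gp : Type*} [Group Gp] [TopologicalSpace Gp]
    [IsTopologicalGroup Gp] [T2Space Gp] (K : Subgroup Gp)
    (h : ∀ a ∈ K, ∀ b ∈ K, a * b = b * a) :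
    ∀ a ∈ K.topologicalClosure, ∀ b ∈ K.topologicalClosure, a * b = b * a := by
  have h1 : ∀ b ∈ (K : Set Gp), ∀ a ∈ closure (K : Set Gp), a * b = b * a := by
    intro b hb
    have : closure (K : Set Gp) ⊆ {a | a * b = b * a} :=
      closure_minimal (fun a ha => h a ha b hb)
        (isClosed_eq (continuous_id.mul continuous_const)
          (continuous_const.mul continuous_id))
    exact fun a ha => this ha
  intro a ha b hb
  have ha' : a ∈ closure (K : Set Gp) := by
    rwa [← Subgroup.topologicalClosure_coe]
  have hb' : b ∈ closure (K : Set Gp) := by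
    rwa [← Subgroup.topologicalClosure_coe]
  have : closure (K : Set Gp) ⊆ {b | a * b = b * a} :=
    closure_minimal (fun c hc => h1 c hc a ha')
      (isClosed_eq (continuous_const.mul continuous_id)
        (continuous_id.mul continuous_const))
  exact this hb'

end aux



/-- Let `G` be a connected compact (linear) Lie group, realized as a compact
connected subgroup of `GL(n, ℝ)`, with Lie algebra
`Lie(G) = {X | exp(tX) ∈ G for all t ∈ ℝ}`, and let `Υ ∈ Lie(G)`.  Then the stabilizer
`S(Υ) = {x ∈ G | Ad(x)Υ = Υ}` (i.e. `xΥ = Υx`) contains a maximal torus of `G`, that is a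
maximal compact connected abelian subgroup of `G`. -/
theorem stabilizer_contains_maximal_torus
    (n : ℕ) (G : Subgroup (Matrix.GeneralLinearGroup (Fin n) ℝ))
    (hGcompact : IsCompact (G : Set (Matrix.GeneralLinearGroup (Fin n) ℝ)))
    (hGconn : IsConnected (G : Set (Matrix.GeneralLinearGroup (Fin n) ℝ)))
    (Υ : Matrix (Fin n) (Fin n) ℝ)
    (hΥ : ∀ t : ℝ, ∃ u : Matrix.GeneralLinearGroup (Fin n) ℝ,
      u ∈ G ∧ (u : Matrix (Fin n) (Fin n) ℝ) = NormedSpace.exp (t • Υ)) :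
    ∃ T : Subgroup (Matrix.GeneralLinearGroup (Fin n) ℝ),
      T ≤ G ∧
      IsCompact (T : Set (Matrix.GeneralLinearGroup (Fin n) ℝ)) ∧
      IsConnected (T : Set (Matrix.GeneralLinearGroup (Fin n) ℝ)) ∧
      (∀ a ∈ T, ∀ b ∈ T, a * b = b * a) ∧
      (∀ T' : Subgroup (Matrix.GeneralLinearGroup (Fin n) ℝ),
        T' ≤ G → IsCompact (T' : Set (Matrix.GeneralLinearGroup (Fin n) ℝ)) →
        IsConnected (T' : Set (Matrix.GeneralLinearGroup (Fin n) ℝ)) →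
        (∀ a ∈ T', ∀ b ∈ T', a * b = b * a) → T ≤ T' → T' = T) ∧
      (∀ x ∈ T, (x : Matrix (Fin n) (Fin n) ℝ) * Υ = Υ * (x : Matrix (Fin n) (Fin n) ℝ)) := by
  set GLn := Matrix.GeneralLinearGroup (Fin n) ℝ
  -- the one-parameter subgroup
  have hinv : ∀ t : ℝ, exp (t • Υ) * exp ((-t) • Υ) = 1 := by
    intro t
    rw [← myexp_mul Υ t (-t)]
    simp [exp_zero]
  let φ : ℝ → GLn := fun t =>
    ⟨exp (t • Υ), exp ((-t) • Υ), hinv t, by simpa using hinv (-t)⟩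
  have φ_coe : ∀ t, (φ t : Matrix (Fin n) (Fin n) ℝ) = exp (t • Υ) := fun _ => rfl
  have φ_mul : ∀ s t : ℝ, φ (s + t) = φ s * φ t := by
    intro s t; apply Units.ext; exact myexp_mul Υ s t
  have φ_zero : φ 0 = 1 := by
    apply Units.ext; show exp ((0:ℝ) • Υ) = 1; simp [exp_zero]
  have φ_inv : ∀ t, (φ t)⁻¹ = φ (-t) := by
    intro t
    apply Units.ext
    rfl
  have φ_cont : Continuous φ := by
    rw [Units.continuous_iff]
    exact ⟨myexp_continuous Υ, (myexp_continuous Υ).comp continuous_neg⟩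
  have φ_memG : ∀ t, φ t ∈ G := by
    intro t
    obtain ⟨u, huG, hu⟩ := hΥ t
    have : φ t = u := by apply Units.ext; rw [φ_coe, hu]
    rw [this]; exact huG
  -- the subgroup generated by the one-parameter group
  let K₀ : Subgroup GLn :=
    { carrier := Set.range φ
      one_mem' := ⟨0, φ_zero⟩
      mul_mem' := by rintro _ _ ⟨s, rfl⟩ ⟨t, rfl⟩; exact ⟨s + t, φ_mul s t⟩
      inv_mem' := by rintro _ ⟨t, rfl⟩; exact ⟨-t, (φ_inv t).symm⟩ }
  have hGclosed : IsClosed (G : Set GLn) := hGcompact.isClosed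
  have hK₀conn : IsConnected (K₀ : Set GLn) := isConnected_range φ_cont
  have hK₀comm : ∀ a ∈ K₀, ∀ b ∈ K₀, a * b = b * a := by
    rintro _ ⟨s, rfl⟩ _ ⟨t, rfl⟩
    rw [← φ_mul, ← φ_mul, add_comm]
  let H := K₀.topologicalClosure
  have hHG : H ≤ G := K₀.topologicalClosure_minimal (fun x ⟨t, ht⟩ => ht ▸ φ_memG t) hGclosed
  -- the collection for Zorn's lemma
  set 𝒮 : Set (Subgroup GLn) :=
    {K | H ≤ K ∧ K ≤ G ∧ IsCompact (K : Set GLn) ∧ IsConnected (K : Set GLn) ∧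
      ∀ a ∈ K, ∀ b ∈ K, a * b = b * a} with h𝒮
  -- a general fact: the closure of a member-candidate is a member
  have closure_mem : ∀ K : Subgroup GLn, H ≤ K.topologicalClosure → K ≤ G →
      IsConnected (K : Set GLn) →
      (∀ a ∈ K, ∀ b ∈ K, a * b = b * a) → K.topologicalClosure ∈ 𝒮 ∧ K ≤ K.topologicalClosure := by
    intro K hHK hKG hKconn hKcomm
    have hle := K.le_topologicalClosure
    have hclG : K.topologicalClosure ≤ G := K.topologicalClosure_minimal hKG hGclosed
    refine ⟨⟨hHK, hclG, ?_, ?_, comm_topologicalClosure K hKcomm⟩, hle⟩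
    · exact IsCompact.of_isClosed_subset hGcompact K.isClosed_topologicalClosure hclG
    · have : (K.topologicalClosure : Set GLn) = closure (K : Set GLn) :=
        Subgroup.topologicalClosure_coe
      rw [this]
      exact hKconn.closure
  have hH𝒮 : H ∈ 𝒮 :=
    (closure_mem K₀ le_rfl (fun x ⟨t, ht⟩ => ht ▸ φ_memG t) hK₀conn hK₀comm).1
  -- Zorn
  have key : ∀ c ⊆ 𝒮, IsChain (· ≤ ·) c → ∀ y ∈ c, ∃ ub ∈ 𝒮, ∀ z ∈ c, z ≤ ub := by
    intro c hc𝒮 hchain y hyc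
    -- union of the chain
    have hne : Nonempty c := ⟨⟨y, hyc⟩⟩
    have hdir : Directed (· ≤ ·) (fun K : c => (K : Subgroup GLn)) :=
      hchain.directedOn.directed_val
    set U : Subgroup GLn := ⨆ K : c, (K : Subgroup GLn) with hU
    have hUcoe : (U : Set GLn) = ⋃ K : c, ((K : Subgroup GLn) : Set GLn) :=
      Subgroup.coe_iSup_of_directed hdir
    have hmemU : ∀ K ∈ c, K ≤ U := fun K hK => le_iSup (fun K : c => (K : Subgroup GLn)) ⟨K, hK⟩
    have hHU : H ≤ U := (hc𝒮 hyc).1.trans (hmemU y hyc)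
    have hUG : U ≤ G := by
      intro x hx
      rw [← SetLike.mem_coe, hUcoe] at hx
      obtain ⟨K, hK⟩ := Set.mem_iUnion.mp hx
      exact (hc𝒮 K.property).2.1 hK
    have hUconn : IsConnected (U : Set GLn) := by
      rw [hUcoe]
      refine ⟨⟨1, Set.mem_iUnion.mpr ⟨⟨y, hyc⟩, (y : Subgroup GLn).one_mem⟩⟩, ?_⟩
      refine isPreconnected_iUnion ⟨1, ?_⟩ ?_
      · exact Set.mem_iInter.mpr fun K => (K : Subgroup GLn).one_mem
      · exact fun K => (hc𝒮 K.property).2.2.2.1.isPreconnected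
    have hUcomm : ∀ a ∈ U, ∀ b ∈ U, a * b = b * a := by
      intro a ha b hb
      rw [← SetLike.mem_coe, hUcoe] at ha hb
      obtain ⟨K₁, hK₁⟩ := Set.mem_iUnion.mp ha
      obtain ⟨K₂, hK₂⟩ := Set.mem_iUnion.mp hb
      rcases hchain.total K₁.property K₂.property with h | h
      · exact (hc𝒮 K₂.property).2.2.2.2 a (h hK₁) b hK₂
      · exact (hc𝒮 K₁.property).2.2.2.2 a hK₁ b (h hK₂)
    obtain ⟨hmem, hle⟩ := closure_mem U (hHU.trans U.le_topologicalClosure) hUG hUconn hUcomm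
    exact ⟨U.topologicalClosure, hmem, fun K hK => (hmemU K hK).trans hle⟩
  obtain ⟨T, hHT, hmax⟩ := zorn_le_nonempty₀ 𝒮 key H hH𝒮
  have hTmem : T ∈ 𝒮 := hmax.prop
  have hTmax : ∀ z ∈ 𝒮, T ≤ z → z ≤ T := fun z hz hTz => hmax.le_of_ge hz hTz
  obtain ⟨hHT', hTG, hTcompact, hTconn, hTcomm⟩ := hTmem
  refine ⟨T, hTG, hTcompact, hTconn, hTcomm, ?_, ?_⟩
  · intro T' hT'G hT'compact hT'conn hT'comm hTT'
    exact le_antisymm (hTmax T' ⟨hHT.trans hTT', hT'G, hT'compact, hT'conn, hT'comm⟩ hTT') hTT'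
  · intro x hx
    apply myexp_comm
    intro t
    have hφT : φ t ∈ T := hHT (K₀.le_topologicalClosure ⟨t, rfl⟩)
    have := hTcomm x hx (φ t) hφT
    have := congrArg (Units.val) this
    exact this
end

section
/- Let v be a complex Lie subalgebra of the complexification k of a compact Lie algebra k0, and suppose v is n-reductive, i.e. v = (v ∩ v̄) ⊕ v_n where v_n is the nilradical of v. Then v_n ⊕ v̄_n = v_n ⊕ ((v_n ⊕ v̄_n) ∩ k0), and consequently k decomposes as a real direct sum k = k0 ⊕ i·m0 ⊕ (i·v0 ⊕ v_n), where v0 = v ∩ k0 and m0 is the orthogonal complement of (v + v̄) ∩ k0 in k0 for an Ad-invariant inner product. -/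
open scoped TensorProduct

section Aux
variable (k0 : Type) [AddCommGroup k0] [Module ℝ k0]

noncomputable abbrev sigK : (ℂ ⊗[ℝ] k0) →ₗ[ℝ] (ℂ ⊗[ℝ] k0) :=
  LinearMap.rTensor k0 Complex.conjAe.toLinearMap

noncomputable abbrev jK : k0 →ₗ[ℝ] (ℂ ⊗[ℝ] k0) := TensorProduct.mk ℝ ℂ k0 1

noncomputable def reK : (ℂ ⊗[ℝ] k0) →ₗ[ℝ] k0 :=
  TensorProduct.lift ((LinearMap.lsmul ℝ k0).comp Complex.reLm)

noncomputable def imK : (ℂ ⊗[ℝ] k0) →ₗ[ℝ] k0 :=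
  TensorProduct.lift ((LinearMap.lsmul ℝ k0).comp Complex.imLm)

variable {k0}

lemma sig_tmul (z : ℂ) (y : k0) : sigK k0 (z ⊗ₜ y) = (starRingEnd ℂ z) ⊗ₜ y := by
  simp [sigK, Complex.conjAe_coe]

lemma re_tmul (z : ℂ) (y : k0) : reK k0 (z ⊗ₜ y) = z.re • y := by
  simp [reK]

lemma im_tmul (z : ℂ) (y : k0) : imK k0 (z ⊗ₜ y) = z.im • y := by
  simp [imK]

lemma sig_sig (x : ℂ ⊗[ℝ] k0) : sigK k0 (sigK k0 x) = x := by
  induction x using TensorProduct.induction_on with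
  | zero => simp
  | tmul z y => simp [sig_tmul]
  | add a b ha hb => simp [map_add, ha, hb]

lemma sig_smul (c : ℂ) (x : ℂ ⊗[ℝ] k0) :
    sigK k0 (c • x) = (starRingEnd ℂ c) • sigK k0 x := by
  induction x using TensorProduct.induction_on with
  | zero => simp
  | tmul z y => rw [TensorProduct.smul_tmul', sig_tmul, sig_tmul, TensorProduct.smul_tmul']; simp
  | add a b ha hb => simp only [smul_add, map_add, ha, hb]

lemma sig_j (a : k0) : sigK k0 (jK k0 a) = jK k0 a := by
  simp [jK, sig_tmul]

lemma decompK (x : ℂ ⊗[ℝ] k0) :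
    x = jK k0 (reK k0 x) + Complex.I • jK k0 (imK k0 x) := by
  induction x using TensorProduct.induction_on with
  | zero => simp
  | tmul z y =>
      rw [re_tmul, im_tmul]
      simp only [jK, TensorProduct.mk_apply, TensorProduct.tmul_smul, TensorProduct.smul_tmul']
      rw [← TensorProduct.add_tmul]
      congr 1
      simp [Complex.real_smul, smul_eq_mul, Complex.ext_iff]
  | add a b ha hb =>
      rw [map_add, map_add, map_add, map_add, smul_add]
      conv_lhs => rw [ha, hb]
      abel

lemma re_j (a : k0) : reK k0 (jK k0 a) = a := by simp [jK, re_tmul]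
lemma im_j (a : k0) : imK k0 (jK k0 a) = 0 := by simp [jK, im_tmul]
lemma re_Ij (a : k0) : reK k0 (Complex.I • jK k0 a) = 0 := by
  simp [jK, TensorProduct.smul_tmul', re_tmul]
lemma im_Ij (a : k0) : imK k0 (Complex.I • jK k0 a) = a := by
  simp [jK, TensorProduct.smul_tmul', im_tmul]

lemma im_sig (x : ℂ ⊗[ℝ] k0) : imK k0 (sigK k0 x) = - imK k0 x := by
  induction x using TensorProduct.induction_on with
  | zero => simp
  | tmul z y => rw [sig_tmul, im_tmul, im_tmul]; simp
  | add a b ha hb => rw [map_add, map_add, map_add, ha, hb]; abel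

lemma fixed_mem_range {x : ℂ ⊗[ℝ] k0} (h : sigK k0 x = x) :
    x ∈ Set.range (jK k0) := by
  have him : imK k0 x = 0 := by
    have h1 := (im_sig x).symm.trans (congrArg (imK k0) h)
    have h2 : (2:ℝ) • imK k0 x = 0 := by
      rw [two_smul]; nth_rewrite 1 [← h1]; exact neg_add_cancel _
    exact (smul_eq_zero.mp h2).resolve_left (by norm_num)
  refine ⟨reK k0 x, ?_⟩
  conv_rhs => rw [decompK x]
  rw [him]; simp [jK]

/-- The conjugation as a `starRingEnd ℂ`-semilinear map. -/
noncomputable def sigSL : (ℂ ⊗[ℝ] k0) →ₛₗ[starRingEnd ℂ] (ℂ ⊗[ℝ] k0) where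
  toFun := sigK k0
  map_add' x y := map_add _ x y
  map_smul' c x := sig_smul c x

lemma sigSL_apply (x : ℂ ⊗[ℝ] k0) : sigSL x = sigK k0 x := rfl

end Aux

section Main

variable {k0 : Type} [LieRing k0] [LieAlgebra ℝ k0] [Module.Finite ℝ k0]

theorem claim2 (v : LieSubalgebra ℂ (ℂ ⊗[ℝ] k0)) (vn : Submodule ℂ (ℂ ⊗[ℝ] k0))
    (hvn_le : (vn : Set (ℂ ⊗[ℝ] k0)) ⊆ v)
    (hnred_disj : ∀ x ∈ (v : Set (ℂ ⊗[ℝ] k0)) ∩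
        (sigK k0 '' (v : Set (ℂ ⊗[ℝ] k0))), x ∈ vn → x = 0) :
    ∀ x ∈ (vn : Set (ℂ ⊗[ℝ] k0)), x ∈ Set.range (jK k0) → x = 0 := by
  rintro x hx ⟨y, rfl⟩
  exact hnred_disj _ ⟨hvn_le hx, ⟨_, hvn_le hx, sig_j y⟩⟩ hx

theorem claim1 (vn : Submodule ℂ (ℂ ⊗[ℝ] k0)) :
    (Set.image2 (· + ·) (vn : Set (ℂ ⊗[ℝ] k0)) (sigK k0 '' (vn : Set (ℂ ⊗[ℝ] k0)))
      = Set.image2 (· + ·) (vn : Set (ℂ ⊗[ℝ] k0))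
          ((Set.image2 (· + ·) (vn : Set (ℂ ⊗[ℝ] k0))
              (sigK k0 '' (vn : Set (ℂ ⊗[ℝ] k0)))) ∩
            Set.range (jK k0))) := by
  ext x
  constructor
  · rintro ⟨n, hn, _, ⟨n', hn', rfl⟩, rfl⟩
    refine ⟨n - n', sub_mem hn hn', n' + sigK k0 n',
      ⟨⟨n', hn', sigK k0 n', ⟨n', hn', rfl⟩, rfl⟩, fixed_mem_range ?_⟩, by abel⟩
    rw [map_add, sig_sig]; exact add_comm _ _
  · rintro ⟨n, hn, w, ⟨⟨n₁, hn₁, _, ⟨n₂, hn₂, rfl⟩, rfl⟩, -⟩, rfl⟩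
    exact ⟨n + n₁, add_mem hn hn₁, sigK k0 n₂, ⟨n₂, hn₂, rfl⟩, by abel⟩

set_option maxHeartbeats 1200000 in
theorem claim3 (B : LinearMap.BilinForm ℝ k0)
    (hsymm : ∀ X Y : k0, B X Y = B Y X)
    (hpos : ∀ X : k0, X ≠ 0 → 0 < B X X)
    (v : LieSubalgebra ℂ (ℂ ⊗[ℝ] k0)) (vn : Submodule ℂ (ℂ ⊗[ℝ] k0))
    (hvn_le : (vn : Set (ℂ ⊗[ℝ] k0)) ⊆ v)
    (hnred_span : (v : Set (ℂ ⊗[ℝ] k0)) =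
      Set.image2 (· + ·)
        ((v : Set (ℂ ⊗[ℝ] k0)) ∩ (sigK k0 '' (v : Set (ℂ ⊗[ℝ] k0))))
        (vn : Set (ℂ ⊗[ℝ] k0)))
    (hnred_disj : ∀ x ∈ (v : Set (ℂ ⊗[ℝ] k0)) ∩
        (sigK k0 '' (v : Set (ℂ ⊗[ℝ] k0))), x ∈ vn → x = 0) :
    (∀ x : ℂ ⊗[ℝ] k0, ∃! t : (ℂ ⊗[ℝ] k0) × (ℂ ⊗[ℝ] k0) × (ℂ ⊗[ℝ] k0) × (ℂ ⊗[ℝ] k0),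
      t.1 ∈ Set.range (jK k0) ∧
      t.2.1 ∈ (fun y => Complex.I • y) ''
        (jK k0 ''
          {y : k0 | ∀ z : k0,
            ((jK k0) z ∈
              Set.image2 (· + ·) (v : Set (ℂ ⊗[ℝ] k0))
                (sigK k0 '' (v : Set (ℂ ⊗[ℝ] k0)))) → B y z = 0}) ∧
      t.2.2.1 ∈ (fun y => Complex.I • y) ''
        ((v : Set (ℂ ⊗[ℝ] k0)) ∩ Set.range (jK k0)) ∧
      t.2.2.2 ∈ (vn : Set (ℂ ⊗[ℝ] k0)) ∧
      x = t.1 + t.2.1 + t.2.2.1 + t.2.2.2) := by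
  classical
  haveI : RingHomSurjective (starRingEnd ℂ) :=
    ⟨fun x => ⟨starRingEnd ℂ x, by simp⟩⟩
  -- the complex submodule v̄
  set vbar : Submodule ℂ (ℂ ⊗[ℝ] k0) := Submodule.map (sigSL (k0 := k0)) v.toSubmodule with hvbar
  have mem_vbar : ∀ x : ℂ ⊗[ℝ] k0,
      x ∈ vbar ↔ x ∈ sigK k0 '' (v : Set (ℂ ⊗[ℝ] k0)) := by
    intro x
    constructor
    · rintro ⟨y, hy, rfl⟩; exact ⟨y, hy, rfl⟩
    · rintro ⟨y, hy, rfl⟩; exact ⟨y, hy, rfl⟩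
  set vplus : Submodule ℂ (ℂ ⊗[ℝ] k0) := v.toSubmodule ⊔ vbar with hvplus
  have memV : ∀ x : ℂ ⊗[ℝ] k0,
      x ∈ Set.image2 (· + ·) (v : Set (ℂ ⊗[ℝ] k0))
        (sigK k0 '' (v : Set (ℂ ⊗[ℝ] k0))) ↔ x ∈ vplus := by
    intro x
    constructor
    · rintro ⟨a, ha, b, hb, rfl⟩
      exact Submodule.mem_sup.mpr ⟨a, ha, b, (mem_vbar b).mpr hb, rfl⟩
    · intro hx
      obtain ⟨a, ha, b, hb, rfl⟩ := Submodule.mem_sup.mp hx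
      exact ⟨a, ha, b, (mem_vbar b).mp hb, rfl⟩
  set W0 : Submodule ℝ k0 := Submodule.comap (jK k0) (vplus.restrictScalars ℝ) with hW0
  -- orthogonal decomposition of k0
  have hrefl : B.IsRefl := fun x y h => by rw [hsymm]; exact h
  have hnd : (B.restrict W0).Nondegenerate := by
    refine (LinearMap.IsRefl.nondegenerate_iff_separatingLeft (B := B.restrict W0) (fun x y h => hrefl _ _ h)).mpr ?_
    intro m h
    by_contra hm
    have h0 := h m
    rw [LinearMap.BilinForm.restrict_apply] at h0
    have : (m : k0) ≠ 0 := fun h' => hm (Subtype.ext h')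
    exact absurd h0 (ne_of_gt (hpos _ this))
  have hcompl := B.isCompl_orthogonal_of_restrict_nondegenerate hrefl hnd
  have hsup : W0 ⊔ B.orthogonal W0 = ⊤ := codisjoint_iff.mp hcompl.codisjoint
  -- zero-sum lemma for (v ∩ v̄) ⊕ vn ⊕ v̄n
  have key0 : ∀ d ∈ (v : Set (ℂ ⊗[ℝ] k0)) ∩ (sigK k0 '' (v : Set (ℂ ⊗[ℝ] k0))),
      ∀ n ∈ vn, ∀ n' ∈ vn, d + n + sigK k0 n' = 0 → d = 0 ∧ n = 0 ∧ n' = 0 := by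
    rintro d ⟨hdv, hdbar⟩ n hn n' hn' heq
    have hσn' : sigK k0 n' = -d - n := by
      rw [eq_neg_of_add_eq_zero_right heq]; abel
    have hσn'v : sigK k0 n' ∈ v := by
      rw [hσn']; exact v.sub_mem (v.neg_mem hdv) (hvn_le hn)
    have hn'0 : n' = 0 :=
      hnred_disj n' ⟨hvn_le hn', ⟨sigK k0 n', hσn'v, sig_sig n'⟩⟩ hn'
    subst hn'0
    simp only [map_zero, add_zero] at heq
    have hd : d = -n := eq_neg_of_add_eq_zero_left heq
    have hd0 : d = 0 := hnred_disj d ⟨hdv, hdbar⟩ (by rw [hd]; exact vn.neg_mem hn)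
    subst hd0
    simp only [zero_add] at heq
    exact ⟨rfl, heq, rfl⟩
  -- decomposition of real points of v + v̄
  have hW : ∀ w : k0, w ∈ W0 → ∃ (a₀ : k0) (n : ℂ ⊗[ℝ] k0),
      jK k0 a₀ ∈ (v : Set (ℂ ⊗[ℝ] k0)) ∧ n ∈ vn ∧
      jK k0 w = jK k0 a₀ + n + sigK k0 n := by
    intro w hw
    have hjw : jK k0 w ∈ vplus := hw
    obtain ⟨a, ha, b, hb, hab⟩ := Submodule.mem_sup.mp hjw
    obtain ⟨c, hc, rfl⟩ := (mem_vbar b).mp hb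
    have ha' : a ∈ (v : Set (ℂ ⊗[ℝ] k0)) := ha
    have hc' : c ∈ (v : Set (ℂ ⊗[ℝ] k0)) := hc
    rw [hnred_span] at ha' hc'
    obtain ⟨d₁, hd₁, n₁, hn₁, rfl⟩ := ha'
    obtain ⟨d₂, hd₂, n₂, hn₂, rfl⟩ := hc'
    -- jw = d₁ + σ d₂ + n₁ + σ n₂
    set d : ℂ ⊗[ℝ] k0 := d₁ + sigK k0 d₂ with hd
    have hdmem : d ∈ (v : Set (ℂ ⊗[ℝ] k0)) ∩ (sigK k0 '' (v : Set (ℂ ⊗[ℝ] k0))) := by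
      obtain ⟨h1, e, hev, he⟩ := id hd₁
      obtain ⟨h3, f, hfv, hf⟩ := id hd₂
      constructor
      · refine v.add_mem h1 ?_
        rw [← hf, sig_sig]; exact hfv
      · exact ⟨e + d₂, v.add_mem hev h3, by rw [map_add, he]⟩
    have heq1 : jK k0 w = d + n₁ + sigK k0 n₂ := by
      rw [← hab, map_add, hd]; beta_reduce; abel
    have heq2 : jK k0 w = sigK k0 d + sigK k0 n₁ + n₂ := by
      have := congrArg (sigK k0) heq1
      rw [sig_j, map_add, map_add, sig_sig] at this
      exact this
    -- subtract the two decompositions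
    have hzero : (d - sigK k0 d) + (n₁ - n₂) + sigK k0 (n₂ - n₁) = 0 := by
      rw [map_sub]
      have h := heq1.symm.trans heq2
      calc (d - sigK k0 d) + (n₁ - n₂) + (sigK k0 n₂ - sigK k0 n₁)
          = (d + n₁ + sigK k0 n₂) - (sigK k0 d + sigK k0 n₁ + n₂) := by abel
        _ = 0 := by rw [h, sub_self]
    have hdsub : d - sigK k0 d ∈
        (v : Set (ℂ ⊗[ℝ] k0)) ∩ (sigK k0 '' (v : Set (ℂ ⊗[ℝ] k0))) := by
      obtain ⟨hdv', e', he'v, he'⟩ := id hdmem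
      constructor
      · refine v.sub_mem hdv' ?_
        rw [← he', sig_sig]; exact he'v
      · exact ⟨e' - d, v.sub_mem he'v hdv', by rw [map_sub, he']⟩
    obtain ⟨hdfix, hn12, -⟩ := key0 _ hdsub _ (sub_mem hn₁ hn₂) _ (sub_mem hn₂ hn₁) hzero
    have hdfix' : sigK k0 d = d := by
      have := sub_eq_zero.mp hdfix; exact this.symm
    have hn12' : n₁ = n₂ := sub_eq_zero.mp hn12
    obtain ⟨a₀, ha₀⟩ := fixed_mem_range hdfix'
    refine ⟨a₀, n₁, ?_, hn₁, ?_⟩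
    · rw [ha₀]; exact hdmem.1
    · rw [ha₀, heq1, hn12']
  -- key uniqueness lemma
  have key_unique : ∀ (a m c : k0) (n : ℂ ⊗[ℝ] k0),
      (∀ z : k0, (jK k0 z ∈ Set.image2 (· + ·) (v : Set (ℂ ⊗[ℝ] k0))
          (sigK k0 '' (v : Set (ℂ ⊗[ℝ] k0)))) → B m z = 0) →
      jK k0 c ∈ (v : Set (ℂ ⊗[ℝ] k0)) → n ∈ vn →
      jK k0 a + Complex.I • jK k0 m + Complex.I • jK k0 c + n = 0 →
      a = 0 ∧ m = 0 ∧ c = 0 ∧ n = 0 := by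
    intro a m c n hmprop hcv hn heq
    -- step 1: m = 0
    have hsv : jK k0 a + Complex.I • jK k0 m ∈ v.toSubmodule := by
      have : jK k0 a + Complex.I • jK k0 m = -(Complex.I • jK k0 c + n) := by
        apply eq_neg_of_add_eq_zero_left
        calc jK k0 a + Complex.I • jK k0 m + (Complex.I • jK k0 c + n)
            = jK k0 a + Complex.I • jK k0 m + Complex.I • jK k0 c + n := by abel
          _ = 0 := heq
      rw [this]
      exact neg_mem (add_mem (v.toSubmodule.smul_mem _ hcv) (hvn_le hn))
    have hσs : sigK k0 (jK k0 a + Complex.I • jK k0 m) = jK k0 a - Complex.I • jK k0 m := by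
      rw [map_add, sig_j, sig_smul, sig_j, Complex.conj_I, neg_smul, ← sub_eq_add_neg]
    have hsum2 : (2 * Complex.I) • jK k0 m ∈ vplus := by
      have h1 : (jK k0 a + Complex.I • jK k0 m) ∈ vplus := Submodule.mem_sup_left hsv
      have h2 : sigK k0 (jK k0 a + Complex.I • jK k0 m) ∈ vplus := by
        exact Submodule.mem_sup_right (⟨_, hsv, rfl⟩ : _ ∈ vbar)
      have h3 := Submodule.sub_mem _ h1 h2
      rw [hσs] at h3
      have : (jK k0 a + Complex.I • jK k0 m) - (jK k0 a - Complex.I • jK k0 m)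
          = (2 * Complex.I) • jK k0 m := by
        rw [two_mul, add_smul]; abel
      rwa [this] at h3
    have hjm : jK k0 m ∈ vplus := by
      have := vplus.smul_mem ((2 * Complex.I)⁻¹) hsum2
      rwa [smul_smul, inv_mul_cancel₀ (by simp [Complex.ext_iff] : (2 * Complex.I : ℂ) ≠ 0),
        one_smul] at this
    have hm0 : m = 0 := by
      by_contra hm
      have hBmm : B m m = 0 := hmprop m ((memV _).mpr hjm)
      exact absurd hBmm (ne_of_gt (hpos _ hm))
    subst hm0
    rw [map_zero, smul_zero, add_zero] at heq
    -- step 2: n = 0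
    have hjav : jK k0 a ∈ v.toSubmodule := by
      have : jK k0 a = -(Complex.I • jK k0 c + n) := by
        apply eq_neg_of_add_eq_zero_left
        calc jK k0 a + (Complex.I • jK k0 c + n)
            = jK k0 a + Complex.I • jK k0 c + n := by abel
          _ = 0 := heq
      rw [this]
      exact neg_mem (add_mem (v.toSubmodule.smul_mem _ hcv) (hvn_le hn))
    have hσn : sigK k0 n = -(jK k0 a) + Complex.I • jK k0 c := by
      have hne : n = -(jK k0 a + Complex.I • jK k0 c) :=
        eq_neg_of_add_eq_zero_right heq
      rw [hne, map_neg, map_add, sig_j, sig_smul, sig_j, Complex.conj_I, neg_smul]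
      abel
    have hσnv : sigK k0 n ∈ v.toSubmodule := by
      rw [hσn]
      exact add_mem (neg_mem hjav) (v.toSubmodule.smul_mem _ hcv)
    have hn0 : n = 0 :=
      hnred_disj n ⟨hvn_le hn, ⟨sigK k0 n, hσnv, sig_sig n⟩⟩ hn
    subst hn0
    rw [add_zero] at heq
    -- step 3: a = c = 0
    have ha0 : a = 0 := by
      have := congrArg (reK k0) heq
      rwa [map_add, re_j, re_Ij, add_zero, map_zero] at this
    have hc0 : c = 0 := by
      have := congrArg (imK k0) heq
      rwa [map_add, im_j, im_Ij, zero_add, map_zero] at this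
    exact ⟨ha0, rfl, hc0, rfl⟩
  -- now the existence and uniqueness
  intro x
  -- existence
  obtain ⟨w, hwW, m, hmO, hq⟩ : ∃ w ∈ W0, ∃ m ∈ B.orthogonal W0, imK k0 x = w + m := by
    have : imK k0 x ∈ W0 ⊔ B.orthogonal W0 := by rw [hsup]; trivial
    obtain ⟨w, hw, m, hm, hwm⟩ := Submodule.mem_sup.mp this
    exact ⟨w, hw, m, hm, hwm.symm⟩
  obtain ⟨a₀, n, ha₀v, hnvn, hjw⟩ := hW w hwW
  set u : ℂ ⊗[ℝ] k0 := Complex.I • n with hu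
  have huvn : u ∈ vn := vn.smul_mem _ hnvn
  have hIσn : Complex.I • sigK k0 n = - sigK k0 u := by
    rw [hu, sig_smul, Complex.conj_I, neg_smul, neg_neg]
  set t : (ℂ ⊗[ℝ] k0) × (ℂ ⊗[ℝ] k0) × (ℂ ⊗[ℝ] k0) × (ℂ ⊗[ℝ] k0) :=
    (jK k0 (reK k0 x) - (u + sigK k0 u), Complex.I • jK k0 m,
      Complex.I • jK k0 a₀, (2 : ℂ) • u) with ht
  have hP : t.1 ∈ Set.range (jK k0) ∧
      t.2.1 ∈ (fun y => Complex.I • y) ''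
        (jK k0 '' {y : k0 | ∀ z : k0, ((jK k0) z ∈
            Set.image2 (· + ·) (v : Set (ℂ ⊗[ℝ] k0))
              (sigK k0 '' (v : Set (ℂ ⊗[ℝ] k0)))) → B y z = 0}) ∧
      t.2.2.1 ∈ (fun y => Complex.I • y) ''
        ((v : Set (ℂ ⊗[ℝ] k0)) ∩ Set.range (jK k0)) ∧
      t.2.2.2 ∈ (vn : Set (ℂ ⊗[ℝ] k0)) ∧
      x = t.1 + t.2.1 + t.2.2.1 + t.2.2.2 := by
    refine ⟨?_, ?_, ?_, ?_, ?_⟩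
    · apply fixed_mem_range
      rw [map_sub, map_add, sig_j, sig_sig]
      have : sigK k0 u + u = u + sigK k0 u := add_comm _ _
      rw [this]
    · exact ⟨jK k0 m, ⟨m, fun z hz => by
        rw [hsymm]; exact hmO z ((memV _).mp hz), rfl⟩, rfl⟩
    · exact ⟨jK k0 a₀, ⟨ha₀v, ⟨a₀, rfl⟩⟩, rfl⟩
    · exact vn.smul_mem _ huvn
    · have hx1 : x = jK k0 (reK k0 x) + Complex.I • jK k0 w + Complex.I • jK k0 m := by
        conv_lhs => rw [decompK x]
        rw [hq, map_add, smul_add, add_assoc]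
      rw [hx1, hjw, smul_add, smul_add, hIσn, ht, hu]
      simp only
      rw [two_smul]
      abel
  -- uniqueness : any two decompositions agree
  have huniq : ∀ s s' : (ℂ ⊗[ℝ] k0) × (ℂ ⊗[ℝ] k0) × (ℂ ⊗[ℝ] k0) × (ℂ ⊗[ℝ] k0),
      (s.1 ∈ Set.range (jK k0) ∧
        s.2.1 ∈ (fun y => Complex.I • y) ''
          (jK k0 '' {y : k0 | ∀ z : k0, ((jK k0) z ∈
              Set.image2 (· + ·) (v : Set (ℂ ⊗[ℝ] k0))
                (sigK k0 '' (v : Set (ℂ ⊗[ℝ] k0)))) → B y z = 0}) ∧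
        s.2.2.1 ∈ (fun y => Complex.I • y) ''
          ((v : Set (ℂ ⊗[ℝ] k0)) ∩ Set.range (jK k0)) ∧
        s.2.2.2 ∈ (vn : Set (ℂ ⊗[ℝ] k0)) ∧
        x = s.1 + s.2.1 + s.2.2.1 + s.2.2.2) →
      (s'.1 ∈ Set.range (jK k0) ∧
        s'.2.1 ∈ (fun y => Complex.I • y) ''
          (jK k0 '' {y : k0 | ∀ z : k0, ((jK k0) z ∈
              Set.image2 (· + ·) (v : Set (ℂ ⊗[ℝ] k0))
                (sigK k0 '' (v : Set (ℂ ⊗[ℝ] k0)))) → B y z = 0}) ∧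
        s'.2.2.1 ∈ (fun y => Complex.I • y) ''
          ((v : Set (ℂ ⊗[ℝ] k0)) ∩ Set.range (jK k0)) ∧
        s'.2.2.2 ∈ (vn : Set (ℂ ⊗[ℝ] k0)) ∧
        x = s'.1 + s'.2.1 + s'.2.2.1 + s'.2.2.2) → s = s' := by
    rintro ⟨s1, s2, s3, s4⟩ ⟨r1, r2, r3, r4⟩
      ⟨⟨a, rfl⟩, ⟨_, ⟨ma, hma, rfl⟩, rfl⟩, ⟨_, ⟨hcv, ⟨c, rfl⟩⟩, rfl⟩, h4, hsum⟩
      ⟨⟨a', rfl⟩, ⟨_, ⟨ma', hma', rfl⟩, rfl⟩, ⟨_, ⟨hcv', ⟨c', rfl⟩⟩, rfl⟩, h4', hsum'⟩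
    have hss : jK k0 (a - a') + Complex.I • jK k0 (ma - ma')
        + Complex.I • jK k0 (c - c') + (s4 - r4) = 0 := by
      have h := hsum.symm.trans hsum'
      rw [map_sub, map_sub, map_sub, smul_sub, smul_sub]
      calc (jK k0 a - jK k0 a') + (Complex.I • jK k0 ma - Complex.I • jK k0 ma')
          + (Complex.I • jK k0 c - Complex.I • jK k0 c') + (s4 - r4)
          = (jK k0 a + Complex.I • jK k0 ma + Complex.I • jK k0 c + s4)
            - (jK k0 a' + Complex.I • jK k0 ma' + Complex.I • jK k0 c' + r4) := by abel
        _ = 0 := by rw [h, sub_self]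
    obtain ⟨hae, hme, hce, hne⟩ := key_unique (a - a') (ma - ma') (c - c') (s4 - r4)
      (fun z hz => by
        rw [map_sub, LinearMap.sub_apply]
        rw [hma z hz, hma' z hz, sub_zero])
      (by rw [map_sub]; exact v.sub_mem hcv hcv')
      (sub_mem h4 h4') hss
    have e1 : a = a' := by rwa [sub_eq_zero] at hae
    have e2 : ma = ma' := by rwa [sub_eq_zero] at hme
    have e3 : c = c' := by rwa [sub_eq_zero] at hce
    have e4 : s4 = r4 := by rwa [sub_eq_zero] at hne
    rw [e1, e2, e3, e4]
  exact ⟨t, hP, fun s' hs' => huniq s' t hs' hP⟩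

end Main

/-- Let `v` be an n-reductive complex Lie subalgebra of the complexification
`k = ℂ ⊗ k0` of a compact Lie algebra `k0` (with Ad-invariant inner product `B` and
conjugation `σ`), i.e. `v = (v ∩ v̄) ⊕ v_n` with `v_n` the nilradical of `v`.  Then
`v_n ⊕ v̄_n = v_n ⊕ ((v_n ⊕ v̄_n) ∩ k0)` (a direct sum), and consequently `k` decomposes as
the real direct sum `k = k0 ⊕ i·m0 ⊕ (i·v0 ⊕ v_n)`, where `v0 = v ∩ k0` and `m0` is the
orthogonal complement of `(v + v̄) ∩ k0` in `k0`. -/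
theorem n_reductive_decomposition
    (k0 : Type) [LieRing k0] [LieAlgebra ℝ k0] [Module.Finite ℝ k0]
    (B : LinearMap.BilinForm ℝ k0)
    (hsymm : ∀ X Y : k0, B X Y = B Y X)
    (hinv : ∀ X Y Z : k0, B ⁅X, Y⁆ Z + B Y ⁅X, Z⁆ = 0)
    (hpos : ∀ X : k0, X ≠ 0 → 0 < B X X)
    (v : LieSubalgebra ℂ (ℂ ⊗[ℝ] k0)) (vn : Submodule ℂ (ℂ ⊗[ℝ] k0))
    (hvn_le : (vn : Set (ℂ ⊗[ℝ] k0)) ⊆ v)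
    (hvn_nilp : ∀ X ∈ vn, IsNilpotent (LieAlgebra.ad ℂ (ℂ ⊗[ℝ] k0) X))
    (hvn_ideal : ∀ X ∈ v, ∀ N ∈ vn, ⁅X, N⁆ ∈ vn)
    (hnred_span : (v : Set (ℂ ⊗[ℝ] k0)) =
      Set.image2 (· + ·)
        ((v : Set (ℂ ⊗[ℝ] k0)) ∩
          (LinearMap.rTensor k0 Complex.conjAe.toLinearMap '' (v : Set (ℂ ⊗[ℝ] k0))))
        (vn : Set (ℂ ⊗[ℝ] k0)))
    (hnred_disj : ∀ x ∈ (v : Set (ℂ ⊗[ℝ] k0)) ∩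
        (LinearMap.rTensor k0 Complex.conjAe.toLinearMap '' (v : Set (ℂ ⊗[ℝ] k0))),
      x ∈ vn → x = 0) :
    -- first claim: `v_n ⊕ v̄_n = v_n ⊕ ((v_n ⊕ v̄_n) ∩ k0)`, a direct sum
    (Set.image2 (· + ·) (vn : Set (ℂ ⊗[ℝ] k0))
        (LinearMap.rTensor k0 Complex.conjAe.toLinearMap '' (vn : Set (ℂ ⊗[ℝ] k0)))
      = Set.image2 (· + ·) (vn : Set (ℂ ⊗[ℝ] k0))
          ((Set.image2 (· + ·) (vn : Set (ℂ ⊗[ℝ] k0))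
              (LinearMap.rTensor k0 Complex.conjAe.toLinearMap ''
                (vn : Set (ℂ ⊗[ℝ] k0)))) ∩
            Set.range (TensorProduct.mk ℝ ℂ k0 1))) ∧
    (∀ x ∈ (vn : Set (ℂ ⊗[ℝ] k0)), x ∈ Set.range (TensorProduct.mk ℝ ℂ k0 1) → x = 0) ∧
    -- second claim: the real direct sum decomposition `k = k0 ⊕ i·m0 ⊕ (i·v0 ⊕ v_n)`
    (∀ x : ℂ ⊗[ℝ] k0, ∃! t : (ℂ ⊗[ℝ] k0) × (ℂ ⊗[ℝ] k0) × (ℂ ⊗[ℝ] k0) × (ℂ ⊗[ℝ] k0),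
      t.1 ∈ Set.range (TensorProduct.mk ℝ ℂ k0 1) ∧
      t.2.1 ∈ (fun y => Complex.I • y) ''
        (TensorProduct.mk ℝ ℂ k0 1 ''
          {y : k0 | ∀ z : k0,
            ((TensorProduct.mk ℝ ℂ k0 1) z ∈
              Set.image2 (· + ·) (v : Set (ℂ ⊗[ℝ] k0))
                (LinearMap.rTensor k0 Complex.conjAe.toLinearMap ''
                  (v : Set (ℂ ⊗[ℝ] k0)))) → B y z = 0}) ∧
      t.2.2.1 ∈ (fun y => Complex.I • y) ''
        ((v : Set (ℂ ⊗[ℝ] k0)) ∩ Set.range (TensorProduct.mk ℝ ℂ k0 1)) ∧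
      t.2.2.2 ∈ (vn : Set (ℂ ⊗[ℝ] k0)) ∧
      x = t.1 + t.2.1 + t.2.2.1 + t.2.2.2) := by
  exact ⟨claim1 vn, claim2 v vn hvn_le hnred_disj,
    claim3 B hsymm hpos v vn hvn_le hnred_span hnred_disj⟩
end
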